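/- Let B ≥ 0 and let L be a family of nonnegative reals indexed by multi-indices, satisfying L_α ≤ B·∑_{γ} L_γ·L_{α−γ} for every multi-index α with |α| ≥ 2, where the sum is over all multi-indices γ ≤ α with 1 ≤ |γ| ≤ |α| − 1. Then for every multi-index α with |α| ≥ 2, L_α ≤ C_{|α|−1}·B^{|α|−1}·(|α|!/α!)·∏_k (L_{ε_k})^{α_k}, where ε_k is the multi-index with a 1 in position k and 0 elsewhere, and |α|!/α! is the multinomial coefficient binom(|α|, α). -/

import Mathlib

/-- The weight `|α| = ∑_k α_k` of a multi-index. -/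
def mdeg (α : ℕ →₀ ℕ) : ℕ := α.sum fun _ n => n

lemma mdeg_add (a b : ℕ →₀ ℕ) : mdeg (a + b) = mdeg a + mdeg b := by
  unfold mdeg
  exact Finsupp.sum_add_index' (fun _ => rfl) (fun _ _ _ => rfl)

lemma mdeg_single (k c : ℕ) : mdeg (Finsupp.single k c) = c := by
  unfold mdeg; exact Finsupp.sum_single_index rfl

lemma mdeg_sub_add {a b : ℕ →₀ ℕ} (h : a ≤ b) : mdeg a + mdeg (b - a) = mdeg b := by
  rw [← mdeg_add, add_tsub_cancel_of_le h]

lemma mdeg_le_of_le {a b : ℕ →₀ ℕ} (h : a ≤ b) : mdeg a ≤ mdeg b := by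
  rw [← mdeg_sub_add h]; omega

def mcoef (g : ℕ →₀ ℕ) : ℕ := Nat.multinomial g.support g

lemma multinomial_subset {g : ℕ →₀ ℕ} {s : Finset ℕ} (h : g.support ⊆ s) :
    Nat.multinomial s g = Nat.multinomial g.support g := by
  have hprod : (∏ i ∈ s, (g i).factorial) = ∏ i ∈ g.support, (g i).factorial := by
    refine (Finset.prod_subset h ?_).symm
    intro x _ hx
    rw [Finsupp.notMem_support_iff.mp hx]; rfl
  have hsum : (∑ i ∈ s, g i) = ∑ i ∈ g.support, g i := by
    refine (Finset.sum_subset h ?_).symm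
    intro x _ hx
    exact Finsupp.notMem_support_iff.mp hx
  have h1 := Nat.multinomial_spec s g
  have h2 := Nat.multinomial_spec g.support g
  rw [hprod, hsum] at h1
  have hpos : 0 < ∏ i ∈ g.support, (g i).factorial :=
    Finset.prod_pos fun i _ => Nat.factorial_pos _
  exact Nat.eq_of_mul_eq_mul_left hpos (h1.trans h2.symm)

lemma mult_single_add {a c : ℕ} {f : ℕ →₀ ℕ} (ha : a ∉ f.support) :
    mcoef (Finsupp.single a c + f) = (c + mdeg f).choose c * mcoef f := by
  unfold mcoef
  set g := Finsupp.single a c + f with hg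
  have hfa : f a = 0 := Finsupp.notMem_support_iff.mp ha
  have hsupp : g.support ⊆ insert a f.support := by
    refine Finsupp.support_add.trans ?_
    apply Finset.union_subset
    · exact (Finsupp.support_single_subset).trans (by simp)
    · exact Finset.subset_insert _ _
  rw [← multinomial_subset hsupp, Nat.multinomial_insert ha]
  have hga : g a = c := by simp [hg, hfa]
  have hgi : ∀ i ∈ f.support, g i = f i := by
    intro i hi
    have : i ≠ a := fun h => ha (h ▸ hi)
    simp [hg, Finsupp.single_apply, Ne.symm this]
  rw [hga, Finset.sum_congr rfl hgi, Nat.multinomial_congr hgi]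
  rfl

lemma sum_Iic_single_add {M : Type*} [AddCommMonoid M] (a b : ℕ) (f : ℕ →₀ ℕ)
    (ha : a ∉ f.support) (F : (ℕ →₀ ℕ) → M) :
    ∑ γ ∈ Finset.Iic (Finsupp.single a b + f), F γ
      = ∑ c ∈ Finset.range (b + 1), ∑ δ ∈ Finset.Iic f, F (Finsupp.single a c + δ) := by
  have hfa : f a = 0 := Finsupp.notMem_support_iff.mp ha
  rw [← Finset.sum_product']
  refine (Finset.sum_nbij' (fun γ => (γ a, γ.erase a))
    (fun p => Finsupp.single a p.1 + p.2) ?_ ?_ ?_ ?_ ?_).symm.symm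
  · intro γ hγ
    rw [Finset.mem_Iic] at hγ
    rw [Finset.mem_product, Finset.mem_range, Finset.mem_Iic]
    constructor
    · have := hγ a
      simpa [hfa] using Nat.lt_succ_of_le (by simpa [hfa] using this)
    · intro x
      rcases eq_or_ne x a with rfl | hx
      · simp
      · have := hγ x
        simpa [Finsupp.single_apply, Ne.symm hx, Finsupp.erase_ne hx] using this
  · intro p hp
    rw [Finset.mem_product, Finset.mem_range, Finset.mem_Iic] at hp
    rw [Finset.mem_Iic]
    intro x
    rcases eq_or_ne x a with rfl | hx
    · simp [hfa, Nat.le_of_lt_succ hp.1, Finsupp.notMem_support_iff.mp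
        (fun h => ha (Finsupp.support_mono hp.2 h))]
    · simpa [Finsupp.single_apply, Ne.symm hx] using hp.2 x
  · intro γ _
    exact Finsupp.single_add_erase a γ
  · intro p hp
    rw [Finset.mem_product, Finset.mem_range, Finset.mem_Iic] at hp
    have hpa : p.2 a = 0 := Finsupp.notMem_support_iff.mp
      (fun h => ha (Finsupp.support_mono hp.2 h))
    ext
    · simp [hpa]
    · rename_i x
      rcases eq_or_ne x a with rfl | hx
      · simp [hpa]
      · simp [Finsupp.erase_ne hx, Finsupp.single_apply, Ne.symm hx]
  · intro γ _
    rw [Finsupp.single_add_erase]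

lemma sub_decomp {a b c : ℕ} {g δ : ℕ →₀ ℕ} (hδg : δ ≤ g) (hga : g a = 0) :
    (Finsupp.single a b + g) - (Finsupp.single a c + δ) = Finsupp.single a (b - c) + (g - δ) := by
  have hδa : δ a = 0 := Nat.le_zero.mp (hga ▸ hδg a)
  ext x
  rcases eq_or_ne x a with rfl | hx
  · simp [Finsupp.tsub_apply, hga, hδa]
  · have := hδg x
    simp [Finsupp.tsub_apply, Finsupp.single_apply, Ne.symm hx]

lemma lemA (f : ℕ →₀ ℕ) (j : ℕ) :
    (∑ γ ∈ Finset.Iic f, if mdeg γ = j then mcoef γ * mcoef (f - γ) else 0)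
      = if j ≤ mdeg f then mcoef f else 0 := by
  induction f using Finsupp.induction generalizing j with
  | zero =>
    have hIic : Finset.Iic (0 : ℕ →₀ ℕ) = {0} := by
      ext γ; simp [Finset.mem_Iic, le_zero_iff]
    rw [hIic]
    simp only [Finset.sum_singleton]
    have h0 : mdeg (0 : ℕ →₀ ℕ) = 0 := rfl
    rw [h0]
    simp only [tsub_zero]
    have : mcoef 0 = 1 := by simp [mcoef]
    rw [this, mul_one]
    split_ifs <;> omega
  | single_add a b g ha hb IH =>
    have hga : g a = 0 := Finsupp.notMem_support_iff.mp ha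
    set m := mdeg g with hm
    rw [sum_Iic_single_add a b g ha]
    have key : ∀ c ∈ Finset.range (b + 1),
        (∑ δ ∈ Finset.Iic g, if mdeg (Finsupp.single a c + δ) = j then
            mcoef (Finsupp.single a c + δ) *
              mcoef ((Finsupp.single a b + g) - (Finsupp.single a c + δ)) else 0)
          = j.choose c * (b + m - j).choose (b - c) *
              (if j ≤ b + m then mcoef g else 0) := by
      intro c hc
      rw [Finset.mem_range] at hc
      have hcb : c ≤ b := Nat.lt_succ_iff.mp hc
      by_cases hcj : c ≤ j ∧ j - c ≤ m
      · obtain ⟨hcj1, hcj2⟩ := hcj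
        have hjbm : j ≤ b + m := by omega
        rw [if_pos hjbm]
        have step : ∀ δ ∈ Finset.Iic g,
            (if mdeg (Finsupp.single a c + δ) = j then
              mcoef (Finsupp.single a c + δ) *
                mcoef ((Finsupp.single a b + g) - (Finsupp.single a c + δ)) else 0)
            = j.choose c * (b + m - j).choose (b - c) *
                (if mdeg δ = j - c then mcoef δ * mcoef (g - δ) else 0) := by
          intro δ hδ
          rw [Finset.mem_Iic] at hδ
          have hδa : δ a = 0 := Nat.le_zero.mp (hga ▸ hδ a)
          have haδ : a ∉ δ.support := Finsupp.notMem_support_iff.mpr hδa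
          have hδm : mdeg δ ≤ m := mdeg_le_of_le hδ
          have hgδa : a ∉ (g - δ).support := by
            rw [Finsupp.notMem_support_iff, Finsupp.tsub_apply, hga, hδa]; rfl
          have hmd : mdeg (Finsupp.single a c + δ) = c + mdeg δ := by
            rw [mdeg_add, mdeg_single]
          have hsub : mdeg δ + mdeg (g - δ) = m := mdeg_sub_add hδ
          rw [hmd, sub_decomp hδ hga]
          split_ifs with h1 h2 h3
          · -- c + mdeg δ = j, mdeg δ = j - c
            rw [mult_single_add haδ, mult_single_add hgδa]
            have e1 : (c + mdeg δ).choose c = j.choose c := by rw [h1]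
            have e2 : (b - c + mdeg (g - δ)).choose (b - c)
                = (b + m - j).choose (b - c) := by
              congr 1; omega
            rw [e1, e2]; ring
          · exact absurd (by omega : mdeg δ = j - c) h2
          · exact absurd (by omega : c + mdeg δ = j) h1
          · rfl
        rw [Finset.sum_congr rfl step, ← Finset.mul_sum, IH (j - c), if_pos hcj2]
      · -- degenerate case: both sides vanish
        have hL : ∀ δ ∈ Finset.Iic g,
            (if mdeg (Finsupp.single a c + δ) = j then
              mcoef (Finsupp.single a c + δ) *
                mcoef ((Finsupp.single a b + g) - (Finsupp.single a c + δ)) else 0) = 0 := by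
          intro δ hδ
          rw [Finset.mem_Iic] at hδ
          have hδm : mdeg δ ≤ m := mdeg_le_of_le hδ
          rw [if_neg]
          rw [mdeg_add, mdeg_single]
          omega
        rw [Finset.sum_eq_zero hL]
        rcases not_and_or.mp hcj with h | h
        · rw [Nat.choose_eq_zero_of_lt (by omega : j < c)]
          ring
        · by_cases hjbm : j ≤ b + m
          · rw [Nat.choose_eq_zero_of_lt (by omega : b + m - j < b - c)]
            ring
          · rw [if_neg hjbm]
            ring
    rw [Finset.sum_congr rfl key, ← Finset.sum_mul]
    have hmf : mdeg (Finsupp.single a b + g) = b + m := by rw [mdeg_add, mdeg_single]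
    rw [hmf]
    by_cases hjbm : j ≤ b + m
    · rw [if_pos hjbm, if_pos hjbm]
      have hV : (∑ c ∈ Finset.range (b + 1), j.choose c * (b + m - j).choose (b - c))
          = (b + m).choose b := by
        have := Nat.add_choose_eq j (b + m - j) b
        rw [Finset.Nat.sum_antidiagonal_eq_sum_range_succ_mk] at this
        rw [← this]
        congr 1
        omega
      rw [hV, mult_single_add ha]
    · rw [if_neg hjbm, if_neg hjbm, mul_zero]

lemma mdeg_eq_sum (a : ℕ →₀ ℕ) : mdeg a = ∑ i ∈ a.support, a i := rfl


lemma mdeg_eq_zero {a : ℕ →₀ ℕ} : mdeg a = 0 ↔ a = 0 := by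
  constructor
  · intro h
    ext x
    by_cases hx : x ∈ a.support
    · have := Finset.single_le_sum (f := fun i => a i) (fun i _ => Nat.zero_le _) hx
      rw [← mdeg_eq_sum, h] at this
      simpa using Nat.le_zero.mp this
    · simpa using Finsupp.notMem_support_iff.mp hx
  · rintro rfl; rfl

lemma mdeg_eq_one {a : ℕ →₀ ℕ} (h : mdeg a = 1) : ∃ k, a = Finsupp.single k 1 := by
  have hne : a ≠ 0 := by intro h0; rw [h0] at h; simp [mdeg] at h
  obtain ⟨k, hk⟩ := Finsupp.ne_iff.mp hne
  simp only [Finsupp.coe_zero, Pi.zero_apply] at hk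
  have hks : k ∈ a.support := Finsupp.mem_support_iff.mpr hk
  refine ⟨k, ?_⟩
  ext x
  rcases eq_or_ne x k with rfl | hxk
  · have h1 : a x ≤ 1 := by
      have := Finset.single_le_sum (f := fun i => a i) (fun i _ => Nat.zero_le _) hks
      rw [← mdeg_eq_sum, h] at this; exact this
    have h2 : 1 ≤ a x := Nat.one_le_iff_ne_zero.mpr hk
    rw [Finsupp.single_eq_same]
    omega
  · by_contra hne'
    rw [Finsupp.single_apply, if_neg (Ne.symm hxk)] at hne'
    have hxs : x ∈ a.support := Finsupp.mem_support_iff.mpr hne'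
    have hsub : ({k, x} : Finset ℕ) ⊆ a.support := by
      intro y hy; simp at hy; rcases hy with rfl | rfl <;> assumption
    have := Finset.sum_le_sum_of_subset (f := fun i => a i) hsub
    rw [Finset.sum_pair (Ne.symm hxk)] at this
    rw [← mdeg_eq_sum, h] at this
    omega

/-- Multi-index Catalan bound: if `L ≥ 0` satisfies
`L_α ≤ B·∑_{γ ≤ α, 1 ≤ |γ| ≤ |α|-1} L_γ·L_{α-γ}` for every multi-index `α` with `|α| ≥ 2`,
then `L_α ≤ C_{|α|-1}·B^{|α|-1}·(|α|!/α!)·∏_k L_{ε_k}^{α_k}` for every such `α`,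
where `C_m` is the `m`-th Catalan number and `|α|!/α!` the multinomial coefficient. -/
theorem multiindex_catalan_bound (B : ℝ) (hB : 0 ≤ B)
    (L : (ℕ →₀ ℕ) → ℝ) (hL : ∀ α, 0 ≤ L α)
    (hrec : ∀ α : ℕ →₀ ℕ, 2 ≤ mdeg α →
      L α ≤ B * ∑ γ ∈ (Finset.Iic α).filter (fun γ => 1 ≤ mdeg γ ∧ mdeg γ ≤ mdeg α - 1),
        L γ * L (α - γ)) :
    ∀ α : ℕ →₀ ℕ, 2 ≤ mdeg α →
      L α ≤ (catalan (mdeg α - 1) : ℝ) * B ^ (mdeg α - 1) *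
        (Nat.multinomial α.support α : ℝ) *
        α.prod fun k m => L (Finsupp.single k 1) ^ m := by
  suffices H : ∀ n : ℕ, ∀ α : ℕ →₀ ℕ, mdeg α = n → 1 ≤ n →
      L α ≤ (catalan (n - 1) : ℝ) * B ^ (n - 1) * (mcoef α : ℝ) *
        α.prod fun k m => L (Finsupp.single k 1) ^ m by
    intro α hα
    exact H (mdeg α) α rfl (by omega)
  intro n
  induction n using Nat.strong_induction_on with
  | _ n IH =>
    intro α hα hn
    rcases eq_or_lt_of_le hn with h1 | h2
    · -- base case n = 1
      obtain ⟨k, rfl⟩ := mdeg_eq_one (h1 ▸ hα)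
      have hsupp : (Finsupp.single k 1).support = {k} :=
        Finsupp.support_single_ne_zero k one_ne_zero
      have hmc : mcoef (Finsupp.single k 1) = 1 := by
        rw [mcoef, hsupp, Nat.multinomial_singleton]
      have hprod : (Finsupp.single k 1).prod (fun k m => L (Finsupp.single k 1) ^ m)
          = L (Finsupp.single k 1) ^ 1 :=
        Finsupp.prod_single_index (pow_zero _)
      rw [← h1, hmc, hprod]
      simp
    · -- inductive case 2 ≤ n
      have hn2 : 2 ≤ n := h2
      have hrecα := hrec α (by omega)
      rw [hα] at hrecα
      set s := (Finset.Iic α).filter (fun γ => 1 ≤ mdeg γ ∧ mdeg γ ≤ n - 1) with hs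
      set F : ℕ → ℕ → ℝ := fun k m => L (Finsupp.single k 1) ^ m with hF
      have hFnn : ∀ γ : ℕ →₀ ℕ, 0 ≤ γ.prod F :=
        fun γ => Finset.prod_nonneg fun k _ => pow_nonneg (hL _) _
      -- products combine
      have prodsub : ∀ γ : ℕ →₀ ℕ, γ ≤ α →
          γ.prod F = ∏ k ∈ α.support, F k (γ k) := by
        intro γ hγ
        refine Finset.prod_subset (Finsupp.support_mono hγ) ?_
        intro x _ hx
        rw [Finsupp.notMem_support_iff.mp hx, hF]
        exact pow_zero _
      have hP : ∀ γ : ℕ →₀ ℕ, γ ≤ α → γ.prod F * (α - γ).prod F = α.prod F := by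
        intro γ hγ
        rw [prodsub γ hγ, prodsub (α - γ) tsub_le_self, ← Finset.prod_mul_distrib]
        refine Finset.prod_congr rfl ?_
        intro k _
        rw [hF]
        simp only
        rw [← pow_add]
        congr 1
        have := hγ k
        rw [Finsupp.tsub_apply]
        omega
      -- pointwise bound
      have hterm : ∀ γ ∈ s, L γ * L (α - γ) ≤
          ((catalan (mdeg γ - 1) : ℝ) * (catalan (n - mdeg γ - 1) : ℝ) *
            ((mcoef γ : ℝ) * (mcoef (α - γ) : ℝ))) * (B ^ (n - 2) * α.prod F) := by
        intro γ hγs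
        rw [hs, Finset.mem_filter, Finset.mem_Iic] at hγs
        obtain ⟨hγα, hj1, hj2⟩ := hγs
        have hjn : mdeg γ + mdeg (α - γ) = n := by rw [mdeg_sub_add hγα, hα]
        have hb1 := IH (mdeg γ) (by omega) γ rfl (by omega)
        have hb2 := IH (n - mdeg γ) (by omega) (α - γ) (by omega) (by omega)
        have hrhs1 : 0 ≤ (catalan (mdeg γ - 1) : ℝ) * B ^ (mdeg γ - 1) * (mcoef γ : ℝ) *
            γ.prod F :=
          mul_nonneg (mul_nonneg (mul_nonneg (Nat.cast_nonneg _) (pow_nonneg hB _))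
            (Nat.cast_nonneg _)) (hFnn γ)
        have hmul := mul_le_mul hb1 hb2 (hL _) hrhs1
        refine (mul_le_mul hb1 hb2 (hL _) hrhs1).trans_eq ?_
        rw [show ((catalan (mdeg γ - 1) : ℝ) * B ^ (mdeg γ - 1) * (mcoef γ : ℝ) * γ.prod F) *
            ((catalan (n - mdeg γ - 1) : ℝ) * B ^ (n - mdeg γ - 1) * (mcoef (α - γ) : ℝ) *
              (α - γ).prod F)
          = ((catalan (mdeg γ - 1) : ℝ) * (catalan (n - mdeg γ - 1) : ℝ) *
              ((mcoef γ : ℝ) * (mcoef (α - γ) : ℝ))) *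
            ((B ^ (mdeg γ - 1) * B ^ (n - mdeg γ - 1)) * (γ.prod F * (α - γ).prod F)) from by
              ring]
        rw [hP γ hγα, ← pow_add]
        congr 3
        omega
      -- sum the bounds
      have hsum : (∑ γ ∈ s, L γ * L (α - γ)) ≤
          (∑ γ ∈ s, (catalan (mdeg γ - 1) : ℝ) * (catalan (n - mdeg γ - 1) : ℝ) *
            ((mcoef γ : ℝ) * (mcoef (α - γ) : ℝ))) * (B ^ (n - 2) * α.prod F) := by
        rw [Finset.sum_mul]
        exact Finset.sum_le_sum hterm
      -- evaluate the coefficient sum via fibers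
      have hfiber : (∑ γ ∈ s, (catalan (mdeg γ - 1) : ℝ) * (catalan (n - mdeg γ - 1) : ℝ) *
            ((mcoef γ : ℝ) * (mcoef (α - γ) : ℝ)))
          = ∑ j ∈ Finset.Icc 1 (n - 1), (catalan (j - 1) : ℝ) * (catalan (n - j - 1) : ℝ) *
              (mcoef α : ℝ) := by
        rw [← Finset.sum_fiberwise_of_maps_to (g := mdeg) (t := Finset.Icc 1 (n - 1)) ?_]
        · refine Finset.sum_congr rfl ?_
          intro j hj
          rw [Finset.mem_Icc] at hj
          have hinner : ∀ γ ∈ s.filter (fun γ => mdeg γ = j),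
              (catalan (mdeg γ - 1) : ℝ) * (catalan (n - mdeg γ - 1) : ℝ) *
                ((mcoef γ : ℝ) * (mcoef (α - γ) : ℝ))
              = (catalan (j - 1) : ℝ) * (catalan (n - j - 1) : ℝ) *
                ((mcoef γ : ℝ) * (mcoef (α - γ) : ℝ)) := by
            intro γ hγ
            rw [Finset.mem_filter] at hγ
            rw [hγ.2]
          rw [Finset.sum_congr rfl hinner, ← Finset.mul_sum]
          congr 1
          have hset : s.filter (fun γ => mdeg γ = j)
              = (Finset.Iic α).filter (fun γ => mdeg γ = j) := by
            rw [hs, Finset.filter_filter]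
            refine Finset.filter_congr ?_
            intro γ _
            constructor
            · rintro ⟨_, h⟩; exact h
            · intro h; exact ⟨by omega, h⟩
          rw [hset, Finset.sum_filter]
          have := lemA α j
          rw [hα, if_pos (by omega : j ≤ n)] at this
          calc (∑ γ ∈ Finset.Iic α, if mdeg γ = j then (mcoef γ : ℝ) * (mcoef (α - γ) : ℝ) else 0)
              = ((∑ γ ∈ Finset.Iic α, if mdeg γ = j then mcoef γ * mcoef (α - γ) else 0 : ℕ) : ℝ) := by
                push_cast
                refine Finset.sum_congr rfl ?_
                intro γ _
                split_ifs <;> simp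
            _ = (mcoef α : ℝ) := by rw [this]
        · intro γ hγ
          rw [hs, Finset.mem_filter] at hγ
          rw [Finset.mem_Icc]
          exact hγ.2
      -- the Catalan recurrence
      have hcat : (∑ j ∈ Finset.Icc 1 (n - 1), (catalan (j - 1) : ℝ) *
            (catalan (n - j - 1) : ℝ) * (mcoef α : ℝ))
          = (catalan (n - 1) : ℝ) * (mcoef α : ℝ) := by
        rw [← Finset.sum_mul]
        congr 1
        have hIccIco : Finset.Icc 1 (n - 1) = Finset.Ico 1 n := by
          rw [← Finset.Ico_add_one_right_eq_Icc]
          congr 1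
          omega
        rw [hIccIco, Finset.sum_Ico_eq_sum_range]
        have : catalan (n - 1) = catalan ((n - 2) + 1) := by congr 1; omega
        rw [this, catalan_succ', Finset.Nat.sum_antidiagonal_eq_sum_range_succ_mk]
        have hr : (n - 2).succ = n - 1 := by omega
        rw [hr]
        push_cast
        refine Finset.sum_congr rfl ?_
        intro i hi
        rw [Finset.mem_range] at hi
        have e1 : 1 + i - 1 = i := by omega
        have e2 : n - (1 + i) - 1 = n - 2 - i := by omega
        rw [e1, e2]
      -- put it all together
      calc L α ≤ B * ∑ γ ∈ s, L γ * L (α - γ) := hrecα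
        _ ≤ B * ((catalan (n - 1) : ℝ) * (mcoef α : ℝ) * (B ^ (n - 2) * α.prod F)) := by
            refine mul_le_mul_of_nonneg_left ?_ hB
            calc (∑ γ ∈ s, L γ * L (α - γ))
                ≤ (∑ γ ∈ s, (catalan (mdeg γ - 1) : ℝ) * (catalan (n - mdeg γ - 1) : ℝ) *
                  ((mcoef γ : ℝ) * (mcoef (α - γ) : ℝ))) * (B ^ (n - 2) * α.prod F) := hsum
              _ = (catalan (n - 1) : ℝ) * (mcoef α : ℝ) * (B ^ (n - 2) * α.prod F) := by
                  rw [hfiber, hcat]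
        _ = (catalan (n - 1) : ℝ) * B ^ (n - 1) * (mcoef α : ℝ) * α.prod F := by
            rw [show B * ((catalan (n - 1) : ℝ) * (mcoef α : ℝ) * (B ^ (n - 2) * α.prod F))
              = (catalan (n - 1) : ℝ) * (B * B ^ (n - 2)) * (mcoef α : ℝ) * α.prod F from by ring]
            have hp : n - 1 = (n - 2) + 1 := by omega
            rw [hp, pow_succ']
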